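/- arXiv:2108.09842 — 3 statements merged into one kernel-verified Lean document; each statement's English description precedes it below -/
import Mathlib

section
/- Let f be a real polynomial in the two variables x, y that is homogeneous of degree n. Then the polynomial identity (n−1)·(f_xx·f_y² − 2·f_xy·f_x·f_y + f_yy·f_x²) = n·(f_xx·f_yy − f_xy²)·f holds, where subscripts denote partial derivatives. Equivalently, the Hessian quadratic form of f evaluated on the direction (−f_y, f_x) tangent to the level sets of f equals n/(n−1) times the determinant of the Hessian of f times f. -/
open MvPolynomial

private lemma X_mul_pderiv_monomial_aux (i : Fin 2) (d : Fin 2 →₀ ℕ) (c : ℝ) :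
    X i * monomial (d - Finsupp.single i 1) (c * d i) = monomial d (c * d i) := by
  rcases Nat.eq_zero_or_pos (d i) with h | h
  · simp [h]
  · have key : Finsupp.single i 1 + (d - Finsupp.single i 1) = d := by
      ext j
      rcases eq_or_ne j i with rfl | hj
      · simp [Finsupp.single_apply]
        omega
      · simp [Finsupp.single_apply, Ne.symm hj]
    rw [X, monomial_mul, one_mul, key]

private lemma euler_aux (n : ℕ) (f : MvPolynomial (Fin 2) ℝ) (hf : f.IsHomogeneous n) :
    X 0 * pderiv (0 : Fin 2) f + X 1 * pderiv (1 : Fin 2) f = C (n : ℝ) * f := by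
  conv_lhs => rw [f.as_sum]
  conv_rhs => rw [f.as_sum]
  rw [map_sum, map_sum, Finset.mul_sum, Finset.mul_sum, Finset.mul_sum,
    ← Finset.sum_add_distrib]
  refine Finset.sum_congr rfl fun d hd => ?_
  have hdeg : d 0 + d 1 = n := by
    have h := hf (MvPolynomial.mem_support_iff.1 hd)
    have : (Finsupp.weight 1 d : ℕ) = d 0 + d 1 := by
      simp [Finsupp.weight_apply, Finsupp.sum_fintype, Fin.sum_univ_two]
    omega
  rw [pderiv_monomial, pderiv_monomial, X_mul_pderiv_monomial_aux,
    X_mul_pderiv_monomial_aux, C_mul_monomial, ← map_add]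
  congr 1
  rw [← hdeg]
  push_cast
  ring

private lemma pderiv_comm_aux (i j : Fin 2) (f : MvPolynomial (Fin 2) ℝ) :
    pderiv i (pderiv j f) = pderiv j (pderiv i f) := by
  induction f using MvPolynomial.induction_on' with
  | monomial d c =>
    rcases eq_or_ne i j with rfl | hij
    · rfl
    · simp only [pderiv_monomial]
      have h1 : ((d - Finsupp.single j 1) : Fin 2 →₀ ℕ) i = d i := by
        simp [Finsupp.single_apply, Ne.symm hij]
      have h2 : ((d - Finsupp.single i 1) : Fin 2 →₀ ℕ) j = d j := by
        simp [Finsupp.single_apply, hij]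
      rw [h1, h2]
      have key : d - Finsupp.single j 1 - Finsupp.single i 1
          = d - Finsupp.single i 1 - Finsupp.single j 1 := by
        ext k
        simp only [Finsupp.tsub_apply]
        omega
      rw [key]
      congr 1
      ring
  | add p q hp hq => simp [map_add, hp, hq]

/-- Euler-type identity for homogeneous polynomials: the Hessian quadratic form
evaluated on the level-set tangent direction `(−f_y, f_x)` equals
`n/(n−1)` times the Hessian determinant times `f`. -/
theorem umbilic_hessian_identity (n : ℕ) (f : MvPolynomial (Fin 2) ℝ)
    (hf : f.IsHomogeneous n) :
    C ((n : ℝ) - 1) *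
      (pderiv (0 : Fin 2) (pderiv (0 : Fin 2) f) * (pderiv (1 : Fin 2) f) ^ 2
        - 2 * pderiv (1 : Fin 2) (pderiv (0 : Fin 2) f) * pderiv (0 : Fin 2) f
            * pderiv (1 : Fin 2) f
        + pderiv (1 : Fin 2) (pderiv (1 : Fin 2) f) * (pderiv (0 : Fin 2) f) ^ 2)
    = C (n : ℝ) *
        (pderiv (0 : Fin 2) (pderiv (0 : Fin 2) f)
            * pderiv (1 : Fin 2) (pderiv (1 : Fin 2) f)
          - (pderiv (1 : Fin 2) (pderiv (0 : Fin 2) f)) ^ 2) * f := by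
  set fx := pderiv (0 : Fin 2) f with hfx
  set fy := pderiv (1 : Fin 2) f with hfy
  set fxx := pderiv (0 : Fin 2) fx with hfxx
  set fxy := pderiv (1 : Fin 2) fx with hfxy
  set fyy := pderiv (1 : Fin 2) fy with hfyy
  have e0 : X 0 * fx + X 1 * fy = C (n : ℝ) * f := euler_aux n f hf
  have e1 : X 0 * fxx + X 1 * fxy = C ((n : ℝ) - 1) * fx := by
    have h := congrArg (pderiv (0 : Fin 2)) e0
    simp only [map_add, pderiv_mul, pderiv_X_self, pderiv_X_of_ne (by decide : (1 : Fin 2) ≠ 0),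
      pderiv_C, one_mul, zero_mul, zero_add, add_zero] at h
    have hcomm : pderiv (0 : Fin 2) fy = fxy := by
      rw [hfy, hfxy, hfx, pderiv_comm_aux]
    rw [hcomm, ← hfxx] at h
    rw [map_sub, map_one, sub_mul, one_mul]
    linear_combination h
  have e2 : X 0 * fxy + X 1 * fyy = C ((n : ℝ) - 1) * fy := by
    have h := congrArg (pderiv (1 : Fin 2)) e0
    simp only [map_add, pderiv_mul, pderiv_X_self, pderiv_X_of_ne (by decide : (0 : Fin 2) ≠ 1),
      pderiv_C, one_mul, zero_mul, zero_add, add_zero] at h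
    rw [← hfxy, ← hfyy] at h
    rw [map_sub, map_one, sub_mul, one_mul]
    linear_combination h
  rcases eq_or_ne ((n : ℝ) - 1) 0 with h1 | h1
  · -- n = 1 : the Hessian determinant vanishes
    rw [h1, map_zero, zero_mul] at e1 e2
    have hX : (X 0 : MvPolynomial (Fin 2) ℝ) ^ 2 ≠ 0 :=
      pow_ne_zero 2 (MvPolynomial.X_ne_zero 0)
    have hD : fxx * fyy - fxy ^ 2 = 0 := by
      have h2 : (X 0 : MvPolynomial (Fin 2) ℝ) ^ 2 * (fxx * fyy - fxy ^ 2) = 0 := by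
        linear_combination (X 0 * fyy) * e1 - (X 0 * fxy) * e2
      rcases mul_eq_zero.1 h2 with h | h
      · exact absurd h hX
      · exact h
    rw [h1, hD]
    simp
  · have hC : (C ((n : ℝ) - 1) : MvPolynomial (Fin 2) ℝ) ≠ 0 := fun hc =>
      h1 ((MvPolynomial.C_injective (Fin 2) ℝ) (show C ((n : ℝ) - 1) = C 0 by rw [hc, map_zero]))
    apply mul_left_cancel₀ hC
    linear_combination
      (2 * fxy * (C ((n : ℝ) - 1) * fy) - fyy * (C ((n : ℝ) - 1) * fx + (X 0 * fxx + X 1 * fxy))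
        + (fxx * fyy - fxy ^ 2) * X 0) * e1
      + (- fxx * (C ((n : ℝ) - 1) * fy + (X 0 * fxy + X 1 * fyy)) + 2 * fxy * (X 0 * fxx + X 1 * fxy)
        + (fxx * fyy - fxy ^ 2) * X 1) * e2
      + C ((n : ℝ) - 1) * (fxx * fyy - fxy ^ 2) * e0
end

section
/- Let f be a real polynomial in two variables, homogeneous of degree n ≥ 2, and suppose the polynomial Q(f) = f_xx·f_y² − 2·f_xy·f_x·f_y + f_yy·f_x² is not identically zero. Then the set U = {θ ∈ [0, 2π) : Q(f)(cos θ, sin θ) = 0} of umbilic points at infinity of the graph of f is finite, its cardinality is even, and its cardinality is at most 6n − 8. -/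
open MvPolynomial Real

/-- `Q(f) = f_xx·f_y² − 2·f_xy·f_x·f_y + f_yy·f_x²`, the Hessian of `f` evaluated
on the tangent direction to the level sets of `f`. -/
noncomputable def Qf (f : MvPolynomial (Fin 2) ℝ) : MvPolynomial (Fin 2) ℝ :=
  pderiv (0 : Fin 2) (pderiv (0 : Fin 2) f) * (pderiv (1 : Fin 2) f) ^ 2
    - 2 * pderiv (1 : Fin 2) (pderiv (0 : Fin 2) f) * pderiv (0 : Fin 2) f
        * pderiv (1 : Fin 2) f
    + pderiv (1 : Fin 2) (pderiv (1 : Fin 2) f) * (pderiv (0 : Fin 2) f) ^ 2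

/-! ### Auxiliary lemmas -/

theorem Umb.degree_eq_sum (m : Fin 2 →₀ ℕ) : m.degree = m 0 + m 1 := by
  rw [Finsupp.degree_eq_weight_one, Finsupp.weight_apply,
    Finsupp.sum_fintype _ _ (fun i => by simp), Fin.sum_univ_two]
  simp

theorem Umb.degree_of_mem {Q : MvPolynomial (Fin 2) ℝ} {d : ℕ} (hQ : Q.IsHomogeneous d)
    {m : Fin 2 →₀ ℕ} (hm : m ∈ Q.support) : m 0 + m 1 = d := by
  rw [← Umb.degree_eq_sum]
  have := hQ (mem_support_iff.mp hm)
  rw [Finsupp.degree_eq_weight_one]; exact this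

/-- The partial derivative of a homogeneous polynomial is homogeneous. -/
theorem Umb.isHomogeneous_pderiv {f : MvPolynomial (Fin 2) ℝ} {n : ℕ}
    (hf : f.IsHomogeneous n) (i : Fin 2) : (pderiv i f).IsHomogeneous (n - 1) := by
  conv_lhs => rw [← f.support_sum_monomial_coeff]
  rw [map_sum]
  apply MvPolynomial.IsHomogeneous.sum
  intro m hm
  rw [pderiv_monomial]
  by_cases h : m i = 0
  · simp [h, isHomogeneous_zero]
  · apply isHomogeneous_monomial
    have hd : m.degree = n := by
      have := hf (mem_support_iff.mp hm)
      rw [Finsupp.degree_eq_weight_one]; exact this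
    have hle : Finsupp.single i 1 ≤ m := by
      rw [Finsupp.single_le_iff]; omega
    have heq : (m - Finsupp.single i 1) + Finsupp.single i 1 = m := tsub_add_cancel_of_le hle
    have h2 : (m - Finsupp.single i 1).degree + (Finsupp.single i 1).degree = m.degree := by
      simp only [Finsupp.degree_eq_weight_one]
      rw [← map_add, heq]
    have h3 : (Finsupp.single i 1).degree = 1 := by
      simp [Finsupp.degree_eq_weight_one, Finsupp.weight_apply, Finsupp.sum_single_index]
    omega

/-- Scaling evaluation of a homogeneous polynomial. -/
theorem Umb.eval_smul {Q : MvPolynomial (Fin 2) ℝ} {d : ℕ} (hQ : Q.IsHomogeneous d)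
    (c : ℝ) (v : Fin 2 → ℝ) : eval (c • v) Q = c ^ d * eval v Q := by
  conv_lhs => rw [← Q.support_sum_monomial_coeff]
  conv_rhs => rw [← Q.support_sum_monomial_coeff]
  rw [map_sum, map_sum, Finset.mul_sum]
  apply Finset.sum_congr rfl
  intro m hm
  rw [MvPolynomial.eval_monomial, MvPolynomial.eval_monomial]
  have hd : m.degree = d := by
    have := hQ (mem_support_iff.mp hm)
    rw [Finsupp.degree_eq_weight_one]; exact this
  rw [Finsupp.prod, Finsupp.prod]
  simp only [Pi.smul_apply, smul_eq_mul, mul_pow]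
  rw [Finset.prod_mul_distrib, Finset.prod_pow_eq_pow_sum]
  have : ∑ i ∈ m.support, m i = d := hd
  rw [this]; ring

theorem Umb.eval_aeval (Q : MvPolynomial (Fin 2) ℝ) (v : Fin 2 → Polynomial ℝ) (y : ℝ) :
    Polynomial.eval y (MvPolynomial.aeval v Q) = eval (fun i => Polynomial.eval y (v i)) Q := by
  induction Q using MvPolynomial.induction_on with
  | C a => simp
  | add p q hp hq => simp [hp, hq]
  | mul_X p i hp => simp [hp]

theorem Umb.vec_eta (v : Fin 2 → ℝ) : ![v 0, v 1] = v := by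
  funext i; fin_cases i <;> simp

theorem Umb.eq_zero_of_dense (Q : MvPolynomial (Fin 2) ℝ)
    (h : ∀ x y : ℝ, y ≠ 0 → eval ![x, y] Q = 0) : Q = 0 := by
  apply MvPolynomial.funext
  intro v
  rw [map_zero, ← Umb.vec_eta v]
  set r : Polynomial ℝ := MvPolynomial.aeval ![Polynomial.C (v 0), Polynomial.X] Q with hr
  have hre : ∀ y : ℝ, Polynomial.eval y r = eval ![v 0, y] Q := by
    intro y
    rw [hr, Umb.eval_aeval]
    have : (fun i => Polynomial.eval y (![Polynomial.C (v 0), Polynomial.X] i)) = ![v 0, y] := by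
      funext i
      fin_cases i <;> simp
    rw [this]
  have hr0 : r = 0 := by
    apply Polynomial.eq_zero_of_infinite_isRoot
    apply Set.Infinite.mono (s := {y : ℝ | y ≠ 0})
    · intro y hy
      simp only [Set.mem_setOf_eq, Polynomial.IsRoot, hre]
      exact h _ _ hy
    · exact Set.infinite_of_finite_compl (by simp)
  have := hre (v 1)
  rw [hr0] at this
  simpa using this.symm

theorem Umb.cos_half_ne_zero (θ : ℝ) (h0 : 0 ≤ θ) (h2 : θ < 2 * π) (hp : θ ≠ π) :
    Real.cos (θ / 2) ≠ 0 := by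
  intro h
  rw [Real.cos_eq_zero_iff] at h
  obtain ⟨k, hk⟩ := h
  have hπ := Real.pi_pos
  have h1 : (0:ℝ) ≤ 2 * k + 1 := by nlinarith
  have h2' : (2:ℝ) * k + 1 < 4 := by nlinarith
  have hk0 : k = 0 ∨ k = 1 := by
    have a : (0:ℤ) ≤ 2 * k + 1 := by exact_mod_cast h1
    have b : (2:ℤ) * k + 1 < 4 := by exact_mod_cast h2'
    omega
  rcases hk0 with rfl | rfl
  · apply hp; push_cast at hk; nlinarith
  · push_cast at hk; nlinarith

theorem Umb.half_angle (θ : ℝ) (hc : Real.cos (θ / 2) ≠ 0) :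
    (1 + Real.tan (θ / 2) ^ 2) * Real.cos θ = 1 - Real.tan (θ / 2) ^ 2 ∧
    (1 + Real.tan (θ / 2) ^ 2) * Real.sin θ = 2 * Real.tan (θ / 2) := by
  have hcos : Real.cos θ = 2 * Real.cos (θ / 2) ^ 2 - 1 := by
    have := Real.cos_two_mul (θ / 2)
    rwa [show 2 * (θ / 2) = θ by ring] at this
  have hsin : Real.sin θ = 2 * Real.sin (θ / 2) * Real.cos (θ / 2) := by
    have := Real.sin_two_mul (θ / 2)
    rwa [show 2 * (θ / 2) = θ by ring] at this
  have hpy := Real.sin_sq_add_cos_sq (θ / 2)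
  rw [Real.tan_eq_sin_div_cos, hcos, hsin]
  constructor <;> field_simp <;> nlinarith [hpy, congrArg (fun z => Real.sin (θ / 2) * z) hpy]

theorem Umb.tan_half_injOn :
    Set.InjOn (fun θ : ℝ => Real.tan (θ / 2)) (Set.Ico 0 (2 * π) \ {π}) := by
  have hπ := Real.pi_pos
  have key : ∀ θ ∈ Set.Ico (0:ℝ) (2 * π) \ {π},
      ∃ u ∈ Set.Ioo (-(π/2)) (π/2), Real.tan u = Real.tan (θ / 2) ∧
        ((0 ≤ u ∧ θ = 2 * u) ∨ (u < 0 ∧ θ = 2 * u + 2 * π)) := by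
    rintro θ ⟨⟨h0, h2⟩, hp⟩
    simp only [Set.mem_singleton_iff] at hp
    by_cases h : θ < π
    · exact ⟨θ / 2, ⟨by nlinarith, by nlinarith⟩, rfl, Or.inl ⟨by linarith, by ring⟩⟩
    · have hgt : π < θ := lt_of_le_of_ne (not_lt.mp h) (Ne.symm hp)
      refine ⟨θ / 2 - π, ⟨by nlinarith, by nlinarith⟩, ?_, Or.inr ⟨by linarith, by ring⟩⟩
      have := Real.tan_periodic (θ / 2 - π)
      rw [sub_add_cancel] at this; exact this.symm
  intro a ha b hb hab
  obtain ⟨u, hu, hut, hucase⟩ := key a ha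
  obtain ⟨v, hv, hvt, hvcase⟩ := key b hb
  have huv : u = v := Real.injOn_tan hu hv (by rw [hut, hvt]; exact hab)
  subst huv
  rcases hucase with ⟨h1, rfl⟩ | ⟨h1, rfl⟩ <;> rcases hvcase with ⟨h2, h2'⟩ | ⟨h2, h2'⟩ <;>
    linarith

theorem Umb.aeval_monomial_two (v : Fin 2 → Polynomial ℝ) (m : Fin 2 →₀ ℕ) (c : ℝ) :
    MvPolynomial.aeval v (monomial m c) = Polynomial.C c * (v 0 ^ m 0 * v 1 ^ m 1) := by
  rw [MvPolynomial.aeval_monomial]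
  rw [Finsupp.prod_fintype _ _ (fun i => pow_zero _), Fin.prod_univ_two]
  rfl

theorem Umb.eval_monomial_two (x : Fin 2 → ℝ) (m : Fin 2 →₀ ℕ) (c : ℝ) :
    eval x (monomial m c) = c * (x 0 ^ m 0 * x 1 ^ m 1) := by
  rw [MvPolynomial.eval_monomial]
  rw [Finsupp.prod_fintype _ _ (fun i => pow_zero _), Fin.prod_univ_two]

/-- The substitution vector for the half-angle (Weierstrass) substitution. -/
noncomputable def Umb.wvec : Fin 2 → Polynomial ℝ :=
  ![1 - Polynomial.X ^ 2, Polynomial.C 2 * Polynomial.X]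

theorem Umb.wvec_natDegree0 : (Umb.wvec 0).natDegree ≤ 2 := by
  show (1 - Polynomial.X ^ 2 : Polynomial ℝ).natDegree ≤ 2
  apply le_trans (Polynomial.natDegree_sub_le _ _)
  simp

theorem Umb.wvec_natDegree1 : (Umb.wvec 1).natDegree ≤ 1 := by
  show (Polynomial.C 2 * Polynomial.X : Polynomial ℝ).natDegree ≤ 1
  apply le_trans Polynomial.natDegree_mul_le
  simp

theorem Umb.natDegree_term_le (m : Fin 2 →₀ ℕ) (c : ℝ) :
    (MvPolynomial.aeval Umb.wvec (monomial m c)).natDegree ≤ 2 * m 0 + m 1 := by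
  rw [Umb.aeval_monomial_two]
  apply le_trans Polynomial.natDegree_mul_le
  rw [Polynomial.natDegree_C, zero_add]
  apply le_trans Polynomial.natDegree_mul_le
  have h0 : (Umb.wvec 0 ^ m 0).natDegree ≤ 2 * m 0 := by
    apply le_trans (Polynomial.natDegree_pow_le)
    calc m 0 * (Umb.wvec 0).natDegree ≤ m 0 * 2 := Nat.mul_le_mul_left _ Umb.wvec_natDegree0
    _ = 2 * m 0 := by ring
  have h1 : (Umb.wvec 1 ^ m 1).natDegree ≤ m 1 := by
    apply le_trans (Polynomial.natDegree_pow_le)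
    calc m 1 * (Umb.wvec 1).natDegree ≤ m 1 * 1 := Nat.mul_le_mul_left _ Umb.wvec_natDegree1
    _ = m 1 := by ring
  omega

theorem Umb.coeff_one_sub_sq_pow (d : ℕ) :
    ((1 - Polynomial.X ^ 2 : Polynomial ℝ) ^ d).coeff (2 * d) = (-1) ^ d := by
  have h1 : (1 - Polynomial.X ^ 2 : Polynomial ℝ) = -(Polynomial.X ^ 2 - Polynomial.C 1) := by
    rw [Polynomial.C_1]; ring
  have hm : (Polynomial.X ^ 2 - Polynomial.C (1:ℝ)).Monic :=
    Polynomial.monic_X_pow_sub_C (1:ℝ) two_ne_zero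
  have hmp : ((Polynomial.X ^ 2 - Polynomial.C (1:ℝ)) ^ d).Monic := hm.pow d
  have hnd : ((Polynomial.X ^ 2 - Polynomial.C (1:ℝ)) ^ d).natDegree = 2 * d := by
    rw [Polynomial.natDegree_pow, Polynomial.natDegree_X_pow_sub_C]; ring
  rw [h1, neg_pow]
  rw [show ((-1 : Polynomial ℝ) ^ d) = Polynomial.C ((-1:ℝ)^d) by simp]
  rw [Polynomial.coeff_C_mul,
    show (2 * d) = ((Polynomial.X ^ 2 - Polynomial.C (1:ℝ)) ^ d).natDegree from hnd.symm,
    ← Polynomial.leadingCoeff, hmp.leadingCoeff, mul_one]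

theorem Umb.natDegree_g_le {Q : MvPolynomial (Fin 2) ℝ} {d : ℕ} (hQ : Q.IsHomogeneous d) :
    (MvPolynomial.aeval Umb.wvec Q).natDegree ≤ 2 * d := by
  conv_lhs => rw [← Q.support_sum_monomial_coeff]
  rw [map_sum]
  apply Polynomial.natDegree_sum_le_of_forall_le
  intro m hm
  have := Umb.degree_of_mem hQ hm
  have := Umb.natDegree_term_le m (coeff m Q)
  omega

theorem Umb.coeff_g_top {Q : MvPolynomial (Fin 2) ℝ} {d : ℕ} (hQ : Q.IsHomogeneous d) :
    (MvPolynomial.aeval Umb.wvec Q).coeff (2 * d) = eval ![(-1 : ℝ), 0] Q := by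
  conv_lhs => rw [← Q.support_sum_monomial_coeff]
  conv_rhs => rw [← Q.support_sum_monomial_coeff]
  rw [map_sum, map_sum, Polynomial.finset_sum_coeff]
  apply Finset.sum_congr rfl
  intro m hm
  have hdm := Umb.degree_of_mem hQ hm
  rw [Umb.eval_monomial_two]
  simp only [Matrix.cons_val_zero, Matrix.cons_val_one, Matrix.head_cons]
  by_cases hb : m 1 = 0
  · have ha : m 0 = d := by omega
    rw [Umb.aeval_monomial_two, hb, ha, pow_zero, mul_one, Polynomial.coeff_C_mul,
      show Umb.wvec 0 = 1 - Polynomial.X ^ 2 from rfl, Umb.coeff_one_sub_sq_pow]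
    rw [pow_zero, mul_one]
  · have hlt : (MvPolynomial.aeval Umb.wvec (monomial m (coeff m Q))).natDegree < 2 * d := by
      have := Umb.natDegree_term_le m (coeff m Q)
      omega
    rw [Polynomial.coeff_eq_zero_of_natDegree_lt hlt, zero_pow hb, mul_zero, mul_zero]

theorem Umb.eval_g (Q : MvPolynomial (Fin 2) ℝ) (t : ℝ) :
    Polynomial.eval t (MvPolynomial.aeval Umb.wvec Q) = eval ![1 - t ^ 2, 2 * t] Q := by
  rw [Umb.eval_aeval]
  have : (fun i => Polynomial.eval t (Umb.wvec i)) = ![1 - t ^ 2, 2 * t] := by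
    funext i
    fin_cases i <;> simp [Umb.wvec]
  rw [this]

theorem Umb.g_ne_zero {Q : MvPolynomial (Fin 2) ℝ} {d : ℕ} (hQ : Q.IsHomogeneous d)
    (hQ0 : Q ≠ 0) : MvPolynomial.aeval Umb.wvec Q ≠ 0 := by
  intro hg
  apply hQ0
  apply Umb.eq_zero_of_dense
  intro x y hy
  set s : ℝ := x / y with hs
  have hsq : Real.sqrt (s ^ 2 + 1) ^ 2 = s ^ 2 + 1 := Real.sq_sqrt (by positivity)
  set t : ℝ := Real.sqrt (s ^ 2 + 1) - s with htdef
  have ht : 0 < t := by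
    rw [htdef]
    nlinarith [Real.sqrt_nonneg (s ^ 2 + 1)]
  have h2 : 1 - t ^ 2 = 2 * s * t := by
    rw [htdef]; nlinarith [hsq]
  set c : ℝ := y / (2 * t) with hc
  have hxy : ![x, y] = c • ![1 - t ^ 2, 2 * t] := by
    funext i
    fin_cases i
    · show x = c * (1 - t ^ 2)
      rw [h2, hc, hs]
      field_simp
    · show y = c * (2 * t)
      rw [hc]
      field_simp
  have hzero : eval ![1 - t ^ 2, 2 * t] Q = 0 := by
    rw [← Umb.eval_g, hg, Polynomial.eval_zero]
  rw [hxy, Umb.eval_smul hQ, hzero, mul_zero]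

theorem Umb.vec_neg (a b : ℝ) : ![-a, -b] = (-1 : ℝ) • ![a, b] := by
  funext i; fin_cases i <;> simp

/-- The graph of a homogeneous polynomial of degree `n ≥ 2` (with `Q(f)` not
identically zero) has a finite, even number of umbilic points at infinity,
and no more than `6n − 8` of them. -/
theorem umbilics_at_infinity_finite_even (n : ℕ) (hn : 2 ≤ n)
    (f : MvPolynomial (Fin 2) ℝ) (hf : f.IsHomogeneous n) (hQ : Qf f ≠ 0) :
    ({θ : ℝ | θ ∈ Set.Ico 0 (2 * π) ∧
        eval ![Real.cos θ, Real.sin θ] (Qf f) = 0}).Finite ∧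
    Even ({θ : ℝ | θ ∈ Set.Ico 0 (2 * π) ∧
        eval ![Real.cos θ, Real.sin θ] (Qf f) = 0}).ncard ∧
    ({θ : ℝ | θ ∈ Set.Ico 0 (2 * π) ∧
        eval ![Real.cos θ, Real.sin θ] (Qf f) = 0}).ncard ≤ 6 * n - 8 := by
  have hπ := Real.pi_pos
  set Q : MvPolynomial (Fin 2) ℝ := Qf f with hQdef
  set U : Set ℝ := {θ : ℝ | θ ∈ Set.Ico 0 (2 * π) ∧
      eval ![Real.cos θ, Real.sin θ] Q = 0} with hUdef
  set d : ℕ := 3 * n - 4 with hd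
  -- homogeneity of Q
  have hx := Umb.isHomogeneous_pderiv hf 0
  have hy := Umb.isHomogeneous_pderiv hf 1
  have hxx := Umb.isHomogeneous_pderiv hx 0
  have hxy := Umb.isHomogeneous_pderiv hx 1
  have hyy := Umb.isHomogeneous_pderiv hy 1
  have h2' : ((2 : MvPolynomial (Fin 2) ℝ)).IsHomogeneous 0 := by
    have : (2 : MvPolynomial (Fin 2) ℝ) = C 2 := by rw [map_ofNat]
    rw [this]; exact isHomogeneous_C _ _
  have hQhom : Q.IsHomogeneous d := by
    rw [hQdef]
    unfold Qf
    have t1 := hxx.mul (hy.pow 2)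
    have t2 := ((h2'.mul hxy).mul hx).mul hy
    have t3 := hyy.mul (hx.pow 2)
    rw [show n - 1 - 1 + (n - 1) * 2 = d by omega] at t1
    rw [show 0 + (n - 1 - 1) + (n - 1) + (n - 1) = d by omega] at t2
    rw [show n - 1 - 1 + (n - 1) * 2 = d by omega] at t3
    exact (t1.sub t2).add t3
  -- the polynomial g
  set g : Polynomial ℝ := MvPolynomial.aeval Umb.wvec Q with hgdef
  have hg0 : g ≠ 0 := Umb.g_ne_zero hQhom hQ
  have hgdeg : g.natDegree ≤ 2 * d := Umb.natDegree_g_le hQhom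
  -- roots
  have hkey : ∀ θ ∈ U \ {π}, Real.tan (θ / 2) ∈ (g.roots.toFinset : Set ℝ) := by
    rintro θ ⟨⟨⟨h0, h2⟩, hev⟩, hp⟩
    simp only [Set.mem_singleton_iff] at hp
    have hc := Umb.cos_half_ne_zero θ h0 h2 hp
    obtain ⟨hA, hB⟩ := Umb.half_angle θ hc
    set t : ℝ := Real.tan (θ / 2) with htdef
    have hvec : ![1 - t ^ 2, 2 * t] = (1 + t ^ 2) • ![Real.cos θ, Real.sin θ] := by
      funext i
      fin_cases i
      · show 1 - t ^ 2 = (1 + t ^ 2) * Real.cos θ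
        rw [hA]
      · show 2 * t = (1 + t ^ 2) * Real.sin θ
        rw [hB]
    have hroot : g.eval t = 0 := by
      rw [hgdef, Umb.eval_g, hvec, Umb.eval_smul hQhom, hev, mul_zero]
    simp only [Finset.coe_sort_coe, Multiset.mem_toFinset, Finset.mem_coe]
    rw [Polynomial.mem_roots hg0]
    exact hroot
  have hinj : Set.InjOn (fun θ : ℝ => Real.tan (θ / 2)) (U \ {π}) := by
    apply Umb.tan_half_injOn.mono
    intro θ hθ
    exact ⟨hθ.1.1, hθ.2⟩
  -- finiteness
  have hfinU' : (U \ {π}).Finite := by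
    apply Set.Finite.of_finite_image _ hinj
    apply Set.Finite.subset (g.roots.toFinset.finite_toSet)
    rintro x ⟨θ, hθ, rfl⟩
    exact hkey θ hθ
  have hUsub : U ⊆ insert π (U \ {π}) := by
    intro θ hθ
    by_cases h : θ = π
    · exact h ▸ Set.mem_insert _ _
    · exact Set.mem_insert_of_mem _ ⟨hθ, h⟩
  have hfinU : U.Finite := (hfinU'.insert π).subset hUsub
  -- cardinality bound on U \ {π}
  have hcard1 : (U \ {π}).ncard ≤ g.natDegree := by
    calc (U \ {π}).ncard
        = ((fun θ : ℝ => Real.tan (θ / 2)) '' (U \ {π})).ncard :=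
          (Set.ncard_image_of_injOn hinj).symm
      _ ≤ (g.roots.toFinset : Set ℝ).ncard := by
          apply Set.ncard_le_ncard _ (g.roots.toFinset.finite_toSet)
          rintro x ⟨θ, hθ, rfl⟩
          exact hkey θ hθ
      _ = g.roots.toFinset.card := by rw [Set.ncard_coe_finset]
      _ ≤ Multiset.card g.roots := Multiset.toFinset_card_le _
      _ ≤ g.natDegree := Polynomial.card_roots' g
  -- main bound
  have hbound : U.ncard ≤ 2 * d := by
    by_cases hπU : π ∈ U
    · -- then the top coefficient of g vanishes
      have hev : eval ![(-1 : ℝ), 0] Q = 0 := by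
        have := hπU.2
        rwa [Real.cos_pi, Real.sin_pi] at this
      have hcoeff : g.coeff (2 * d) = 0 := by
        rw [hgdef, Umb.coeff_g_top hQhom, hev]
      have hgd : g.natDegree ≠ 2 * d := by
        intro h
        apply hg0
        apply Polynomial.leadingCoeff_eq_zero.mp
        unfold Polynomial.leadingCoeff
        rw [h]
        exact hcoeff
      have hgdeg' : g.natDegree ≤ 2 * d - 1 := by omega
      calc U.ncard ≤ (insert π (U \ {π})).ncard :=
            Set.ncard_le_ncard hUsub (hfinU'.insert π)
        _ ≤ (U \ {π}).ncard + 1 := Set.ncard_insert_le _ _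
        _ ≤ g.natDegree + 1 := by omega
        _ ≤ 2 * d := by
            have hd2 : 1 ≤ 2 * d := by omega
            omega
    · have : U \ {π} = U := Set.diff_singleton_eq_self hπU
      rw [← this]
      omega
  -- evenness
  set V : Set ℝ := U ∩ Set.Ico 0 π with hV
  set W : Set ℝ := U ∩ Set.Ico π (2 * π) with hW
  have hUVW : U = V ∪ W := by
    ext θ
    constructor
    · intro hθ
      obtain ⟨⟨h0, h2⟩, hev⟩ := hθ
      by_cases h : θ < π
      · exact Or.inl ⟨⟨⟨h0, h2⟩, hev⟩, h0, h⟩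
      · exact Or.inr ⟨⟨⟨h0, h2⟩, hev⟩, not_lt.mp h, h2⟩
    · rintro (⟨h, _⟩ | ⟨h, _⟩) <;> exact h
  have hdisj : Disjoint V W := by
    apply Set.disjoint_left.mpr
    rintro θ ⟨_, _, hlt⟩ ⟨_, hge, _⟩
    exact absurd hlt (not_lt.mpr hge)
  have hmemflip : ∀ θ : ℝ, eval ![Real.cos θ, Real.sin θ] Q = 0 →
      eval ![Real.cos (θ + π), Real.sin (θ + π)] Q = 0 := by
    intro θ hev
    have hcos : Real.cos (θ + π) = -Real.cos θ := by simp [Real.cos_add]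
    have hsin : Real.sin (θ + π) = -Real.sin θ := by simp [Real.sin_add]
    rw [hcos, hsin, Umb.vec_neg, Umb.eval_smul hQhom, hev, mul_zero]
  have hWV : W = (fun θ : ℝ => θ + π) '' V := by
    ext θ
    constructor
    · rintro ⟨⟨⟨h0, h2⟩, hev⟩, hge, hlt⟩
      refine ⟨θ - π, ⟨⟨⟨by linarith, by linarith⟩, ?_⟩, by constructor <;> linarith⟩,
        by ring⟩
      have := hmemflip (θ - π)
      rw [sub_add_cancel] at this
      -- we need the reverse direction: eval at (θ - π) from eval at θ
      have hcos : Real.cos (θ - π) = -Real.cos θ := by simp [Real.cos_sub]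
      have hsin : Real.sin (θ - π) = -Real.sin θ := by simp [Real.sin_sub]
      rw [hcos, hsin, Umb.vec_neg, Umb.eval_smul hQhom, hev, mul_zero]
    · rintro ⟨σ, ⟨⟨⟨h0, h2⟩, hev⟩, hge, hlt⟩, rfl⟩
      show σ + π ∈ W
      exact ⟨⟨⟨by linarith, by linarith⟩, hmemflip σ hev⟩, by linarith, by linarith⟩
  have hVfin : V.Finite := hfinU.subset Set.inter_subset_left
  have hWfin : W.Finite := hfinU.subset Set.inter_subset_left
  have hcardW : W.ncard = V.ncard := by
    rw [hWV]
    exact Set.ncard_image_of_injective _ (add_left_injective π)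
  have hcardU : U.ncard = V.ncard + W.ncard := by
    rw [hUVW]
    exact Set.ncard_union_eq hdisj hVfin hWfin
  refine ⟨hfinU, ⟨V.ncard, by omega⟩, by omega⟩
end

section
/- Let a, b be nonzero real numbers and let f(x,y) = x²/a + y²/b. If ab > 0 then Q(f)(cos θ, sin θ) ≠ 0 for every θ, so the elliptic paraboloid z = f(x,y) has no umbilic points at infinity; if ab < 0 then the set {θ ∈ [0, 2π) : Q(f)(cos θ, sin θ) = 0} has exactly four elements, so the hyperbolic paraboloid has exactly four umbilic points at infinity. -/
open MvPolynomial Real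

/-- The polynomial `x²/a + y²/b` defining the paraboloid. -/
noncomputable def parab (a b : ℝ) : MvPolynomial (Fin 2) ℝ :=
  C (1 / a) * X 0 ^ 2 + C (1 / b) * X 1 ^ 2

lemma eval_Qf_parab (a b c s : ℝ) :
    eval ![c, s] (Qf (parab a b)) = 8 / (a ^ 2 * b) * c ^ 2 + 8 / (a * b ^ 2) * s ^ 2 := by
  simp [Qf, parab, pderiv_X, pow_two]
  ring

lemma eval_Qf_parab_eq_zero_iff (a b c s : ℝ) (ha : a ≠ 0) (hb : b ≠ 0) :
    eval ![c, s] (Qf (parab a b)) = 0 ↔ b * c ^ 2 + a * s ^ 2 = 0 := by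
  have hfac : 8 / (a ^ 2 * b) * c ^ 2 + 8 / (a * b ^ 2) * s ^ 2
      = 8 / (a ^ 2 * b ^ 2) * (b * c ^ 2 + a * s ^ 2) := by
    field_simp
  have hne : (8 : ℝ) / (a ^ 2 * b ^ 2) ≠ 0 := by positivity
  rw [eval_Qf_parab, hfac, mul_eq_zero]
  exact or_iff_right hne

lemma hyperbolic_card (a b : ℝ) (hab : a * b < 0) :
    ({θ : ℝ | θ ∈ Set.Ico 0 (2 * π) ∧ b * cos θ ^ 2 + a * sin θ ^ 2 = 0}).ncard = 4 := by
  have hpi := Real.pi_pos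
  have hne : a - b ≠ 0 := by
    intro h
    have : a = b := by linarith
    rw [this] at hab; nlinarith [sq_nonneg b]
  set k : ℝ := (a + b) / (a - b) with hk
  have hksq : k ^ 2 < 1 := by
    rw [hk, div_pow, div_lt_one (by positivity)]; nlinarith
  have hk1 : -1 < k := by nlinarith
  have hk2 : k < 1 := by nlinarith
  set α : ℝ := Real.arccos k with hα
  have hα0 : 0 < α := Real.arccos_pos.2 hk2
  have hαπ : α < π :=
    lt_of_le_of_ne (Real.arccos_le_pi k) fun h => absurd (Real.arccos_eq_pi.mp h) (by linarith)
  have hcosα : Real.cos α = k := Real.cos_arccos hk1.le hk2.le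
  set m : ℝ := α / 2 with hm
  have hm0 : 0 < m := by positivity
  have hmπ : m < π / 2 := by rw [hm]; linarith
  have key : ∀ θ : ℝ, (b * cos θ ^ 2 + a * sin θ ^ 2 = 0) ↔ cos (2 * θ) = cos (2 * m) := by
    intro θ
    have h2m : (2 : ℝ) * m = α := by rw [hm]; ring
    rw [h2m, hcosα, Real.cos_two_mul, Real.sin_sq θ]
    constructor
    · intro h
      rw [hk]; field_simp; nlinarith [h]
    · intro h
      have h' : (a - b) * (2 * cos θ ^ 2 - 1) = a + b := by
        rw [hk] at h; field_simp at h; linarith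
      nlinarith [h']
  have hset : {θ : ℝ | θ ∈ Set.Ico 0 (2 * π) ∧ b * cos θ ^ 2 + a * sin θ ^ 2 = 0}
      = {m, π - m, π + m, 2*π - m} := by
    ext θ
    simp only [Set.mem_setOf_eq, Set.mem_Ico, key, Set.mem_insert_iff, Set.mem_singleton_iff]
    constructor
    · rintro ⟨⟨h0, h2⟩, hcos⟩
      rw [Real.cos_eq_cos_iff] at hcos
      obtain ⟨n, hn | hn⟩ := hcos
      · have hθ : θ = m - n * π := by linarith
        have hn1 : (n:ℝ) < 1 := by nlinarith
        have hn2 : (-2:ℝ) < n := by nlinarith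
        have hn1' : n < 1 := by exact_mod_cast hn1
        have hn2' : (-2:ℤ) < n := by exact_mod_cast hn2
        interval_cases n <;> push_cast at hθ
        · right; right; left; linarith
        · left; linarith
      · have hθ : θ = n * π - m := by linarith
        have hn1 : (0:ℝ) < n := by nlinarith
        have hn2 : (n:ℝ) < 3 := by nlinarith
        have hn1' : (0:ℤ) < n := by exact_mod_cast hn1
        have hn2' : n < 3 := by exact_mod_cast hn2
        interval_cases n <;> push_cast at hθ
        · right; left; linarith
        · right; right; right; linarith
    · rintro (h | h | h | h) <;> subst h <;>
        refine ⟨⟨by linarith, by linarith⟩, ?_⟩ <;> rw [Real.cos_eq_cos_iff]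
      · exact ⟨0, Or.inl (by push_cast; ring)⟩
      · exact ⟨1, Or.inr (by push_cast; ring)⟩
      · exact ⟨-1, Or.inl (by push_cast; ring)⟩
      · exact ⟨2, Or.inr (by push_cast; ring)⟩
  rw [hset]
  rw [Set.ncard_insert_of_notMem (by
        simp only [Set.mem_insert_iff, Set.mem_singleton_iff]
        push_neg; refine ⟨by intro h; linarith, by intro h; linarith, by intro h; linarith⟩)
      (Set.toFinite _),
    Set.ncard_insert_of_notMem (by
        simp only [Set.mem_insert_iff, Set.mem_singleton_iff]
        push_neg; exact ⟨by intro h; linarith, by intro h; linarith⟩) (Set.toFinite _),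
    Set.ncard_insert_of_notMem (by
        simp only [Set.mem_singleton_iff]; intro h; linarith) (Set.toFinite _),
    Set.ncard_singleton]

/-- The elliptic paraboloid (`ab > 0`) has no umbilic points at infinity, while
the hyperbolic paraboloid (`ab < 0`) has exactly four umbilic points at infinity. -/
theorem paraboloid_umbilics_at_infinity (a b : ℝ) (ha : a ≠ 0) (hb : b ≠ 0) :
    (0 < a * b →
      ∀ θ : ℝ, eval ![Real.cos θ, Real.sin θ] (Qf (parab a b)) ≠ 0) ∧
    (a * b < 0 →
      ({θ : ℝ | θ ∈ Set.Ico 0 (2 * π) ∧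
          eval ![Real.cos θ, Real.sin θ] (Qf (parab a b)) = 0}).ncard = 4) := by
  constructor
  · intro hab θ h
    rw [eval_Qf_parab_eq_zero_iff a b _ _ ha hb] at h
    have hsc := Real.sin_sq_add_cos_sq θ
    have h1 : a * b * Real.cos θ ^ 2 + a ^ 2 * Real.sin θ ^ 2 = 0 := by
      linear_combination a * h
    have h2 : a * b * Real.cos θ ^ 2 ≤ 0 := by nlinarith [sq_nonneg (a * Real.sin θ)]
    have h3 : 0 ≤ a * b * Real.cos θ ^ 2 := mul_nonneg hab.le (sq_nonneg _)
    have h4 : a * b * Real.cos θ ^ 2 = 0 := le_antisymm h2 h3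
    rcases mul_eq_zero.mp h4 with h5 | h5
    · exact absurd h5 hab.ne'
    · have h6 : Real.sin θ ^ 2 = 1 := by linarith
      have h7 : a ^ 2 = 0 := by nlinarith
      exact ha (by nlinarith [sq_nonneg a])
  · intro hab
    have : {θ : ℝ | θ ∈ Set.Ico 0 (2 * π) ∧
        eval ![Real.cos θ, Real.sin θ] (Qf (parab a b)) = 0}
        = {θ : ℝ | θ ∈ Set.Ico 0 (2 * π) ∧ b * cos θ ^ 2 + a * sin θ ^ 2 = 0} := by
      ext θ
      simp only [Set.mem_setOf_eq, eval_Qf_parab_eq_zero_iff a b _ _ ha hb]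
    rw [this]
    exact hyperbolic_card a b hab
end
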